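/- Let p, q be distinct primes and let H = (Z/qZ)^n ⋊_ρ (Z/pZ)^m for an action ρ : (Z/pZ)^m → GL_n(Z/qZ). Then H has a quotient isomorphic to Z/qZ if and only if the trivial representation occurs as a subrepresentation of ρ (i.e., there is a nonzero vector in (Z/qZ)^n fixed by the whole image of ρ). -/

import Mathlib

open SemidirectProduct Multiplicative Finset

/-- Let `p ≠ q` be primes and `H = (ℤ/qℤ)^n ⋊_ρ (ℤ/pℤ)^m`. Then `H` has a quotient
isomorphic to `ℤ/qℤ` if and only if the trivial representation occurs as a
subrepresentation of `ρ`, i.e. there is a nonzero vector fixed by the whole action. -/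
theorem stmt_6 (p q : ℕ) (hp : p.Prime) (hq : q.Prime) (hpq : p ≠ q) (n m : ℕ)
    (ρ : Multiplicative (Fin m → ZMod p) →* MulAut (Multiplicative (Fin n → ZMod q))) :
    (∃ f : (Multiplicative (Fin n → ZMod q)) ⋊[ρ] Multiplicative (Fin m → ZMod p) →*
        Multiplicative (ZMod q), Function.Surjective f) ↔
      (∃ v : Fin n → ZMod q, v ≠ 0 ∧
        ∀ g : Multiplicative (Fin m → ZMod p),
          ρ g (Multiplicative.ofAdd v) = Multiplicative.ofAdd v) := by
  haveI : Fact p.Prime := ⟨hp⟩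
  haveI : Fact q.Prime := ⟨hq⟩
  have hpne : (p : ZMod q) ≠ 0 := fun h =>
    hpq ((Nat.prime_dvd_prime_iff_eq hq hp).1 ((ZMod.natCast_eq_zero_iff p q).1 h)).symm
  have hcardeq : Fintype.card (Multiplicative (Fin m → ZMod p)) = p ^ m := by
    simp [ZMod.card]
  have hcard : ((Fintype.card (Multiplicative (Fin m → ZMod p)) : ℕ) : ZMod q) ≠ 0 := by
    rw [hcardeq]; push_cast; exact pow_ne_zero _ hpne
  constructor
  · rintro ⟨f, hf⟩
    have hinv : ∀ (g : Multiplicative (Fin m → ZMod p)) (x : Multiplicative (Fin n → ZMod q)),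
        f (inl (ρ g x)) = f (inl x) := by
      intro g x
      rw [inl_aut, map_mul, map_mul, map_inv, mul_comm (f (inr g))]
      simp
    have hg1 : ∀ g : Multiplicative (Fin m → ZMod p), f (inr g) = 1 := by
      intro g
      have h1 : f (inr g) ^ p = 1 := by
        rw [← map_pow, ← map_pow]
        have hgp : g ^ p = 1 := by
          have h0 : toAdd (g ^ p) = 0 := by
            rw [toAdd_pow]
            funext i
            simp [nsmul_eq_mul, ZMod.natCast_self]
          rw [← ofAdd_toAdd (g ^ p), h0, ofAdd_zero]
        rw [hgp, map_one, map_one]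
      have h2 : f (inr g) ^ q = 1 := by
        have h3 := pow_card_eq_one (x := f (inr g))
        rwa [show Fintype.card (Multiplicative (ZMod q)) = q by simp [ZMod.card]] at h3
      have hd : orderOf (f (inr g)) ∣ Nat.gcd p q :=
        Nat.dvd_gcd (orderOf_dvd_of_pow_eq_one h1) (orderOf_dvd_of_pow_eq_one h2)
      rw [Nat.Coprime.gcd_eq_one ((Nat.coprime_primes hp hq).2 hpq)] at hd
      exact orderOf_eq_one_iff.1 (Nat.eq_one_of_dvd_one hd ▸ rfl)
    obtain ⟨x0, hx0⟩ : ∃ x : Fin n → ZMod q, f (inl (ofAdd x)) = ofAdd 1 := by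
      obtain ⟨y, hy⟩ := hf (ofAdd 1)
      refine ⟨toAdd y.left, ?_⟩
      rw [ofAdd_toAdd]
      rw [← inl_left_mul_inr_right y, map_mul, hg1, mul_one] at hy
      exact hy
    have key : f (inl (ofAdd (∑ g : Multiplicative (Fin m → ZMod p),
        toAdd (ρ g (ofAdd x0))))) =
        ofAdd ((Fintype.card (Multiplicative (Fin m → ZMod p)) : ZMod q)) := by
      have hcomp := map_prod (f.comp (SemidirectProduct.inl (φ := ρ)))
        (fun g => ofAdd (toAdd (ρ g (ofAdd x0)))) Finset.univ
      simp only [MonoidHom.comp_apply] at hcomp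
      rw [ofAdd_sum, hcomp]
      have : ∀ g : Multiplicative (Fin m → ZMod p),
          f (inl (ofAdd (toAdd (ρ g (ofAdd x0))))) = ofAdd 1 := by
        intro g; rw [ofAdd_toAdd, hinv, hx0]
      rw [Finset.prod_congr rfl fun g _ => this g, Finset.prod_const, Finset.card_univ,
        ← ofAdd_nsmul, nsmul_eq_mul, mul_one]
    refine ⟨∑ g : Multiplicative (Fin m → ZMod p), toAdd (ρ g (ofAdd x0)), ?_, ?_⟩
    · intro hv0
      rw [hv0, ofAdd_zero, map_one, map_one] at key
      exact hcard (ofAdd.injective key.symm)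
    · intro h
      rw [ofAdd_sum, map_prod]
      refine Fintype.prod_equiv (Equiv.mulLeft h) _ _ (fun g => ?_)
      simp only [ofAdd_toAdd, Equiv.coe_mulLeft]
      rw [← MulAut.mul_apply, ← map_mul]
  · rintro ⟨v, hv, hfix⟩
    obtain ⟨i, hi⟩ : ∃ i, v i ≠ 0 := by
      by_contra hc
      push_neg at hc
      exact hv (funext hc)
    set φ : (Fin n → ZMod q) →+ ZMod q :=
      { toFun := fun x => ∑ g : Multiplicative (Fin m → ZMod p), toAdd (ρ g⁻¹ (ofAdd x)) i
        map_zero' := by simp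
        map_add' := by
          intro x y
          rw [← Finset.sum_add_distrib]
          apply Finset.sum_congr rfl
          intro g _
          rw [ofAdd_add, map_mul, toAdd_mul, Pi.add_apply] } with hφ
    have hφinv : ∀ (g : Multiplicative (Fin m → ZMod p)) (x : Fin n → ZMod q),
        φ (toAdd (ρ g (ofAdd x))) = φ x := by
      intro h x
      show (∑ g : Multiplicative (Fin m → ZMod p), toAdd (ρ g⁻¹ (ofAdd (toAdd (ρ h (ofAdd x))))) i)
        = ∑ g : Multiplicative (Fin m → ZMod p), toAdd (ρ g⁻¹ (ofAdd x)) i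
      refine Fintype.sum_equiv (Equiv.mulLeft h⁻¹) _ _ (fun g => ?_)
      simp only [ofAdd_toAdd, Equiv.coe_mulLeft, mul_inv_rev, inv_inv]
      rw [← MulAut.mul_apply, ← map_mul]
    have hφv : φ v ≠ 0 := by
      have hval : φ v = (Fintype.card (Multiplicative (Fin m → ZMod p)) : ZMod q) * v i := by
        show (∑ g : Multiplicative (Fin m → ZMod p), toAdd (ρ g⁻¹ (ofAdd v)) i) = _
        rw [Finset.sum_congr rfl fun g _ => by rw [hfix g⁻¹, toAdd_ofAdd]]
        rw [Finset.sum_const, Finset.card_univ, nsmul_eq_mul]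
      rw [hval]
      exact mul_ne_zero hcard hi
    set f₁ : Multiplicative (Fin n → ZMod q) →* Multiplicative (ZMod q) :=
      AddMonoidHom.toMultiplicative φ with hf₁
    refine ⟨SemidirectProduct.lift f₁ 1 ?_, ?_⟩
    · intro g
      refine MonoidHom.ext fun x => ?_
      simp only [MonoidHom.comp_apply, MulEquiv.coe_toMonoidHom, MulAut.conj_apply,
        MonoidHom.one_apply, one_mul, mul_one, inv_one]
      show f₁ (ρ g x) = f₁ x
      have h5 := hφinv g (toAdd x)
      exact congrArg ofAdd h5
    · intro c
      set k := ((toAdd c) * (φ v)⁻¹).val with hk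
      refine ⟨inl (ofAdd (k • v)), ?_⟩
      rw [lift_inl]
      show ofAdd (φ (k • v)) = c
      rw [map_nsmul, nsmul_eq_mul, hk, ZMod.natCast_val, ZMod.cast_id]
      rw [mul_assoc, inv_mul_cancel₀ hφv, mul_one, ofAdd_toAdd]
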